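/- arXiv:2007.04919 — 7 statements merged into one kernel-verified Lean document; each statement's English description precedes it below -/
import Mathlib

section
/- Let G be a finite group and p a prime. Then the sum over the conjugacy classes K of G of the p-part |K|_p of the class size satisfies Σ_K |K|_p ≥ |G|_p, with equality if and only if G is a p-group. -/
open ConjClasses MulAction

theorem stmt_0 (p : ℕ) (hp : p.Prime) (G : Type*) [Group G] [Finite G] :
    p ^ ((Nat.card G).factorization p) ≤
      ∑ᶠ K : ConjClasses G, p ^ ((K.carrier.ncard).factorization p) ∧
    ((∑ᶠ K : ConjClasses G, p ^ ((K.carrier.ncard).factorization p))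
        = p ^ ((Nat.card G).factorization p) ↔ IsPGroup p G) := by
  classical
  cases nonempty_fintype G
  set n := Nat.card G with hn
  have hn0 : n ≠ 0 := Nat.card_pos.ne'
  -- the sum of class sizes is the group order
  have hsum : ∑ K : ConjClasses G, K.carrier.ncard = n := by
    rw [hn, ← Group.sum_card_conj_classes_eq_card G, finsum_eq_sum_of_fintype]
  -- each class size divides the group order
  have hdvd : ∀ K : ConjClasses G, K.carrier.ncard ∣ n := by
    intro K
    obtain ⟨g, rfl⟩ := K.exists_rep
    rw [← ConjAct.orbit_eq_carrier_conjClasses]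
    have horb := MulAction.card_orbit_mul_card_stabilizer_eq_card_group (ConjAct G) g
    have hcard : (orbit (ConjAct G) g).ncard = Fintype.card (orbit (ConjAct G) g) := by
      rw [← Nat.card_coe_set_eq, Nat.card_eq_fintype_card]
    have hG : Fintype.card (ConjAct G) = n := by
      rw [hn, Nat.card_eq_fintype_card]; rfl
    exact ⟨Fintype.card (stabilizer (ConjAct G) g), by rw [hcard, ← hG, ← horb]⟩
  have hpos : ∀ K : ConjClasses G, K.carrier.ncard ≠ 0 := by
    intro K
    obtain ⟨g, rfl⟩ := K.exists_rep
    exact ((Set.ncard_pos (Set.toFinite _)).2 ⟨g, mem_carrier_mk⟩).ne'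
  -- per-term inequality
  have hle : ∀ K : ConjClasses G,
      K.carrier.ncard ≤ p ^ ((K.carrier.ncard).factorization p) * (n / p ^ n.factorization p) := by
    intro K
    set d := K.carrier.ncard with hd
    have h1 : d = p ^ d.factorization p * (d / p ^ d.factorization p) :=
      (Nat.ordProj_mul_ordCompl_eq_self d p).symm
    have h2 : d / p ^ d.factorization p ∣ n / p ^ n.factorization p :=
      Nat.ordCompl_dvd_ordCompl_of_dvd (hdvd K) p
    have h3 : d / p ^ d.factorization p ≤ n / p ^ n.factorization p :=
      Nat.le_of_dvd (Nat.ordCompl_pos p hn0) h2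
    calc d = p ^ d.factorization p * (d / p ^ d.factorization p) := h1
      _ ≤ p ^ d.factorization p * (n / p ^ n.factorization p) :=
        Nat.mul_le_mul_left _ h3
  have hc0 : 0 < n / p ^ n.factorization p := Nat.ordCompl_pos p hn0
  have hsum_le : n ≤ (∑ K : ConjClasses G, p ^ ((K.carrier.ncard).factorization p))
      * (n / p ^ n.factorization p) := by
    calc n = ∑ K : ConjClasses G, K.carrier.ncard := hsum.symm
      _ ≤ ∑ K : ConjClasses G,
            p ^ ((K.carrier.ncard).factorization p) * (n / p ^ n.factorization p) :=
          Finset.sum_le_sum fun K _ => hle K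
      _ = (∑ K : ConjClasses G, p ^ ((K.carrier.ncard).factorization p))
            * (n / p ^ n.factorization p) := by rw [← Finset.sum_mul]
  have hineq : p ^ n.factorization p ≤
      ∑ K : ConjClasses G, p ^ ((K.carrier.ncard).factorization p) := by
    exact Nat.le_of_mul_le_mul_right
      ((Nat.ordProj_mul_ordCompl_eq_self n p).trans_le hsum_le) hc0
  rw [finsum_eq_sum_of_fintype]
  refine ⟨hineq, ?_, ?_⟩
  · -- equality → p-group
    intro heq
    -- equality forces each term to achieve equality; use the class of 1
    have hterm : ∀ K ∈ (Finset.univ : Finset (ConjClasses G)),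
        K.carrier.ncard =
          p ^ ((K.carrier.ncard).factorization p) * (n / p ^ n.factorization p) := by
      have htot : ∑ K : ConjClasses G, K.carrier.ncard
          = ∑ K : ConjClasses G,
              p ^ ((K.carrier.ncard).factorization p) * (n / p ^ n.factorization p) := by
        rw [hsum, ← Finset.sum_mul, heq, Nat.ordProj_mul_ordCompl_eq_self n p]
      exact fun K _ =>
        (Finset.sum_eq_sum_iff_of_le (fun K _ => hle K)).1 htot K (Finset.mem_univ K)
    have hone : (ConjClasses.mk (1 : G)).carrier.ncard = 1 := by
      have : (ConjClasses.mk (1 : G)).carrier = {1} := by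
        ext a
        simp [mem_carrier_iff_mk_eq, ConjClasses.mk_eq_mk_iff_isConj, isConj_one_left]
      rw [this, Set.ncard_singleton]
    have h1 := hterm (ConjClasses.mk (1 : G)) (Finset.mem_univ _)
    rw [hone] at h1
    have hcompl : n / p ^ n.factorization p = 1 := by
      simpa using h1.symm
    have hnp : n = p ^ n.factorization p := by
      conv_lhs => rw [← Nat.ordProj_mul_ordCompl_eq_self n p]
      rw [hcompl, mul_one]
    exact IsPGroup.of_card hnp
  · -- p-group → equality
    intro hpg
    have : Fact p.Prime := ⟨hp⟩
    obtain ⟨k, hk⟩ := hpg.exists_card_eq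
    have hppow : ∀ m j : ℕ, m = p ^ j → p ^ m.factorization p = m := by
      rintro m j rfl
      rw [hp.factorization_pow, Finsupp.single_eq_same]
    have hterm : ∀ K : ConjClasses G,
        p ^ ((K.carrier.ncard).factorization p) = K.carrier.ncard := by
      intro K
      obtain ⟨j, _, hj⟩ := (Nat.dvd_prime_pow hp).1 ((hn.trans hk) ▸ hdvd K)
      exact hppow _ j hj
    calc ∑ K : ConjClasses G, p ^ ((K.carrier.ncard).factorization p)
        = ∑ K : ConjClasses G, K.carrier.ncard := Finset.sum_congr rfl fun K _ => hterm K
      _ = n := hsum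
      _ = p ^ n.factorization p := (hppow n k (hn.trans hk)).symm
end

section
/- Let p be a prime, D a finite abelian p-group, and T a finite group of automorphisms of D whose order is coprime to p. If x ∈ D has order p^i and there exist t ∈ T and k ∈ ℤ with t(x) = x^{1+kp}, then x^{1+kp} = x (equivalently p^{i-1} divides k). -/
private lemma aux_sq_dvd (y : ℤ) : ∀ m : ℕ, y ^ 2 ∣ (1 + y) ^ m - 1 - m * y
  | 0 => by simp
  | (m + 1) => by
    have ih := aux_sq_dvd y m
    have e : (1 + y) ^ (m + 1) - 1 - ((m : ℤ) + 1) * y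
        = (1 + y) * ((1 + y) ^ m - 1 - m * y) + m * y ^ 2 := by ring
    push_cast
    rw [e]
    exact dvd_add (ih.mul_left _) ⟨m, by ring⟩

private lemma aux_pow_dvd (p : ℕ) (hp : p.Prime) (m : ℕ) (hm : Nat.Coprime m p) (k : ℤ) :
    ∀ j : ℕ, (p : ℤ) ^ (j + 1) ∣ (1 + k * p) ^ m - 1 → (p : ℤ) ^ (j + 1) ∣ k * p
  | 0 => fun _ => by simp
  | (j + 1) => fun H => by
    have hIH : (p : ℤ) ^ (j + 1) ∣ k * p :=
      aux_pow_dvd p hp m hm k j ((pow_dvd_pow _ (by omega)).trans H)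
    obtain ⟨a, ha⟩ := hIH
    have hpne : ((p : ℤ)) ^ (j + 1) ≠ 0 := by
      have : (0 : ℤ) < (p : ℤ) := by exact_mod_cast hp.pos
      positivity
    -- p^(j+2) divides (k*p)^2
    have h2 : (p : ℤ) ^ (j + 2) ∣ (k * p) ^ 2 := by
      rw [ha, mul_pow, ← pow_mul]
      exact dvd_mul_of_dvd_left (pow_dvd_pow _ (by omega)) _
    have hsq : (p : ℤ) ^ (j + 2) ∣ (1 + k * p) ^ m - 1 - m * (k * p) :=
      h2.trans (aux_sq_dvd (k * p) m)
    have h3 : (p : ℤ) ^ (j + 2) ∣ (m : ℤ) * (k * p) := by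
      have e : (m : ℤ) * (k * p)
          = ((1 + k * p) ^ m - 1) - ((1 + k * p) ^ m - 1 - m * (k * p)) := by ring
      rw [e]; exact dvd_sub H hsq
    -- cancel p^(j+1)
    have h4 : (p : ℤ) ∣ (m : ℤ) * a := by
      have e : (m : ℤ) * (k * p) = (p : ℤ) ^ (j + 1) * ((m : ℤ) * a) := by
        rw [ha]; ring
      have e2 : ((p : ℤ)) ^ (j + 2) = (p : ℤ) ^ (j + 1) * p := by ring
      rw [e, e2] at h3
      exact (mul_dvd_mul_iff_left hpne).mp h3
    have hpm : ¬ (p : ℤ) ∣ (m : ℤ) := by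
      rw [Int.natCast_dvd_natCast]
      exact (hp.coprime_iff_not_dvd).mp hm.symm
    have hpa : (p : ℤ) ∣ a := by
      rcases (Nat.prime_iff_prime_int.mp hp).dvd_mul.mp h4 with h' | h'
      · exact absurd h' hpm
      · exact h'
    obtain ⟨b, hb⟩ := hpa
    exact ⟨b, by rw [ha, hb]; ring⟩

theorem stmt_1 (p : ℕ) (hp : p.Prime) (D : Type*) [CommGroup D] [Finite D]
    (hD : IsPGroup p D)
    (T : Subgroup (MulAut D)) (hT : (Nat.card T).Coprime p)
    (x : D) (i : ℕ) (hx : orderOf x = p ^ i)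
    (t : MulAut D) (ht : t ∈ T) (k : ℤ) (h : t x = x ^ ((1 : ℤ) + k * p)) :
    x ^ ((1 : ℤ) + k * p) = x ∧ (p : ℤ) ^ (i - 1) ∣ k := by
  set m := orderOf t with hm
  -- m is coprime to p
  have hdvd_card : m ∣ Nat.card T := by
    have : orderOf (⟨t, ht⟩ : T) ∣ Nat.card T := orderOf_dvd_natCard _
    rwa [Subgroup.orderOf_mk] at this
  have hmcop : m.Coprime p := Nat.Coprime.coprime_dvd_left hdvd_card hT
  have hcardne : Nat.card T ≠ 0 := by
    intro h0
    rw [h0] at hT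
    exact hp.one_lt.ne' (by simpa [Nat.Coprime] using hT)
  have hmne : m ≠ 0 := by
    intro h0
    rw [h0] at hdvd_card
    exact hcardne (Nat.eq_zero_of_zero_dvd hdvd_card)
  -- iterate: t^n x = x ^ (1+kp)^n
  have key : ∀ n : ℕ, (t ^ n) x = x ^ (((1 : ℤ) + k * p) ^ n) := by
    intro n
    induction n with
    | zero => simp
    | succ n ihn =>
      have : (t ^ (n + 1)) x = (t ^ n) (t x) := by
        rw [pow_succ]; rfl
      rw [this, h, map_zpow, ihn, ← zpow_mul, pow_succ]
  have hxm : x ^ (((1 : ℤ) + k * p) ^ m - 1) = 1 := by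
    have := key m
    rw [pow_orderOf_eq_one t] at this
    simp only [MulAut.one_apply] at this
    rw [zpow_sub, zpow_one, ← this]
    simp
  have hdvd : ((p : ℤ)) ^ i ∣ ((1 : ℤ) + k * p) ^ m - 1 := by
    have := (orderOf_dvd_iff_zpow_eq_one (G := D)).mpr hxm
    rwa [hx, Nat.cast_pow] at this
  rcases Nat.eq_zero_or_pos i with hi | hi
  · subst hi
    have hx1 : x = 1 := orderOf_eq_one_iff.mp (by simpa using hx)
    simp [hx1]
  · obtain ⟨j, rfl⟩ : ∃ j, i = j + 1 := ⟨i - 1, by omega⟩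
    have hkp : (p : ℤ) ^ (j + 1) ∣ k * p := by
      apply aux_pow_dvd p hp m hmcop k j
      simpa using hdvd
    have hpne : (p : ℤ) ≠ 0 := by exact_mod_cast hp.pos.ne'
    have hk : (p : ℤ) ^ j ∣ k := by
      have e : ((p : ℤ)) ^ (j + 1) = (p : ℤ) ^ j * p := by ring
      rw [e] at hkp
      exact (mul_dvd_mul_iff_right hpne).mp hkp
    constructor
    · have h1 : x ^ (k * p) = 1 := by
        apply (orderOf_dvd_iff_zpow_eq_one (G := D)).mp
        rw [hx]
        exact_mod_cast hkp
      rw [zpow_add, zpow_one, h1, mul_one]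
    · simpa using hk
end

section
/- Let p be a prime, D a finite abelian p-group, and T ≤ Aut(D) with gcd(|T|,p)=1. Define x ~ y iff there exist t ∈ T and k ∈ ℤ with t(x) = y^{1+kp}. Then every ~-equivalence class consisting of elements of order p^i (i ≥ 1) is a union of exactly p^{i-1} T-orbits. Consequently, the number of T-orbits of elements of order p^i equals p^{i-1} times the number of ~-equivalence classes of elements of order p^i. -/
private lemma sq_dvd_pow_aux (e : ℤ) (n : ℕ) : e ^ 2 ∣ (1 + e) ^ n - (1 + n * e) := by
  induction n with
  | zero => simp
  | succ n ih =>
    have h : (1 + e) ^ (n + 1) - (1 + ((n : ℕ) + 1 : ℕ) * e)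
        = (1 + e) * ((1 + e) ^ n - (1 + n * e)) + n * e ^ 2 := by push_cast; ring
    rw [h]
    exact dvd_add (Dvd.dvd.mul_left ih _) ⟨n, mul_comm _ _⟩

private lemma lift_cong (p : ℕ) (hp : p.Prime) (i : ℕ) (n : ℕ) (hn : ¬ (p : ℤ) ∣ (n : ℤ))
    (c : ℤ) (h1 : (p : ℤ) ∣ c - 1) (hni : (p : ℤ) ^ i ∣ c ^ n - 1) :
    (p : ℤ) ^ i ∣ c - 1 := by
  have hpz : (0:ℤ) < p := by exact_mod_cast hp.pos
  suffices H : ∀ j, 1 ≤ j → j ≤ i → (p : ℤ) ^ j ∣ c - 1 by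
    rcases Nat.eq_zero_or_pos i with h | h
    · simp [h]
    · exact H i h le_rfl
  intro j hj hji
  induction j, hj using Nat.le_induction with
  | base => simpa using h1
  | succ j hj ih =>
    obtain ⟨d, hd⟩ := ih (by omega)
    have hce : c = 1 + (p:ℤ) ^ j * d := by linarith
    have h2 : ((p:ℤ)^j*d) ^ 2 ∣ c ^ n - (1 + n * ((p:ℤ)^j*d)) := by
      rw [hce]; exact sq_dvd_pow_aux _ n
    have hp1 : (p:ℤ) ^ (j + 1) ∣ ((p:ℤ)^j*d) ^ 2 := by
      refine ⟨(p:ℤ)^(j-1) * d^2, ?_⟩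
      have : j + 1 + (j - 1) = j * 2 := by omega
      rw [mul_pow, ← pow_mul, ← this, pow_add]; ring
    have h3 : (p:ℤ) ^ (j+1) ∣ c ^ n - 1 := dvd_trans (pow_dvd_pow _ (by omega)) hni
    have h4 : (p:ℤ) ^ (j+1) ∣ (n : ℤ) * ((p:ℤ)^j*d) := by
      have he : (n:ℤ) * ((p:ℤ)^j*d) = (c ^ n - 1) - (c ^ n - (1 + n * ((p:ℤ)^j*d))) := by ring
      rw [he]; exact dvd_sub h3 (dvd_trans hp1 h2)
    have h5 : (p:ℤ) ∣ (n : ℤ) * d := by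
      have hpj : ((p:ℤ)^j) ≠ 0 := pow_ne_zero _ (by positivity)
      obtain ⟨q, hq⟩ := h4
      refine ⟨q, mul_left_cancel₀ hpj ?_⟩
      rw [show (p:ℤ)^j * ((n:ℤ)*d) = (n:ℤ) * ((p:ℤ)^j*d) by ring, hq, pow_succ]; ring
    have h6 : (p:ℤ) ∣ d := by
      rcases (Nat.prime_iff_prime_int.mp hp).dvd_mul.mp h5 with h | h
      · exact absurd h hn
      · exact h
    obtain ⟨d', hd'⟩ := h6
    exact ⟨d', by rw [hd, hd', pow_succ]; ring⟩

section Grp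
set_option linter.unusedSectionVars false
variable {D : Type*} [CommGroup D] [Finite D]

private lemma not_dvd_one_add (p : ℕ) (hp : p.Prime) (k : ℤ) : ¬ (p:ℤ) ∣ (1 + k * p) := by
  intro h
  have h1 : (p:ℤ) ∣ 1 := by
    have := dvd_sub h (⟨k, mul_comm _ _⟩ : (p:ℤ) ∣ k * p)
    simpa using this
  have := Int.le_of_dvd one_pos h1
  have := hp.two_le
  omega

private lemma coprime_inv (p : ℕ) (hp : p.Prime) (i : ℕ) (a : ℤ) (ha : ¬ (p:ℤ) ∣ a) :
    ∃ u v : ℤ, u * a + v * (p:ℤ)^i = 1 := by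
  have hc : IsCoprime a ((p:ℤ)^i) := by
    refine IsCoprime.pow_right ?_
    exact ((Nat.prime_iff_prime_int.mp hp).coprime_iff_not_dvd.mpr ha).symm
  obtain ⟨u, v, huv⟩ := hc
  exact ⟨u, v, huv⟩

private lemma zpow_swap (y : D) (m n : ℤ) : (y ^ m) ^ n = (y ^ n) ^ m := by
  rw [← zpow_mul, mul_comm, zpow_mul]

private lemma zpow_orderOf_cast (x : D) : x ^ ((orderOf x : ℤ)) = 1 := by
  rw [zpow_natCast]; exact pow_orderOf_eq_one x

private lemma zpow_eq_of_dvd (x : D) (a b : ℤ) (h : (orderOf x : ℤ) ∣ a - b) : x ^ a = x ^ b := by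
  have h1 : x ^ (a - b) = 1 := orderOf_dvd_iff_zpow_eq_one.mp h
  rw [zpow_sub] at h1
  rw [← mul_inv_eq_one]
  exact h1

/-- order of x^a equals order of x when a is coprime to p and orderOf x = p^i -/
private lemma orderOf_zpow_coprime (p : ℕ) (hp : p.Prime) (i : ℕ) (x : D)
    (hx : orderOf x = p ^ i) (a : ℤ) (ha : ¬ (p:ℤ) ∣ a) : orderOf (x ^ a) = p ^ i := by
  obtain ⟨u, v, huv⟩ := coprime_inv p hp i a ha
  have hxpi : x ^ (((p:ℤ))^i) = 1 := by
    have := zpow_orderOf_cast x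
    rw [hx] at this; exact_mod_cast this
  have hxa : (x ^ a) ^ u = x := by
    rw [← zpow_mul]
    have : a * u = 1 - v * (p:ℤ)^i := by linarith
    rw [this, zpow_sub, zpow_one, mul_comm v, zpow_mul, hxpi, one_zpow, inv_one, mul_one]
  refine Nat.dvd_antisymm ?_ ?_
  · rw [← hx]
    apply orderOf_dvd_of_pow_eq_one
    have : (x ^ a) ^ (orderOf x : ℕ) = (x ^ (orderOf x : ℕ)) ^ a := by
      rw [← zpow_natCast, ← zpow_mul, mul_comm, zpow_mul, zpow_natCast]
    rw [this, pow_orderOf_eq_one, one_zpow]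
  · have h1 : x ^ ((orderOf (x ^ a) : ℤ)) = 1 := by
      obtain ⟨N, hN⟩ : ∃ N, orderOf (x ^ a) = N := ⟨_, rfl⟩
      rw [hN, ← hxa, zpow_swap, ← hN, zpow_orderOf_cast, one_zpow]
    rw [← hx]
    exact_mod_cast orderOf_dvd_iff_zpow_eq_one.mpr h1

private lemma key_rigid (p : ℕ) (hp : p.Prime) (T : Subgroup (MulAut D))
    (hT : (Nat.card T).Coprime p) (i : ℕ) (hi : 1 ≤ i) (x : D) (hx : orderOf x = p ^ i)
    (t : MulAut D) (ht : t ∈ T) (a b : ℤ) (ha : ¬ (p:ℤ) ∣ a)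
    (hab : (p:ℤ) ∣ b - a) (htx : t (x ^ a) = x ^ b) :
    (p:ℤ) ^ i ∣ b - a := by
  obtain ⟨u, v, huv⟩ := coprime_inv p hp i a ha
  have hxpi : x ^ (((p:ℤ))^i) = 1 := by
    have := zpow_orderOf_cast x
    rw [hx] at this; exact_mod_cast this
  -- t x = x ^ (u * b)
  have htx2 : t x = x ^ (u * b) := by
    have hx1 : x = (x ^ a) ^ u * (x ^ (((p:ℤ))^i)) ^ v := by
      rw [hxpi, one_zpow, mul_one, ← zpow_mul]
      have : a * u = 1 - v * (p:ℤ)^i := by linarith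
      rw [this, zpow_sub, zpow_one, mul_comm v, zpow_mul, hxpi, one_zpow, inv_one, mul_one]
    calc t x = t ((x ^ a) ^ u * (x ^ (((p:ℤ))^i)) ^ v) := by rw [← hx1]
    _ = (t (x ^ a)) ^ u * (t (x ^ (((p:ℤ))^i))) ^ v := by
        simp only [map_mul, map_zpow]
    _ = x ^ (b * u) := by rw [htx, hxpi, map_one, one_zpow, mul_one, ← zpow_mul]
    _ = x ^ (u * b) := by rw [mul_comm]
  set c : ℤ := u * b with hc
  -- iterate
  have hiter : ∀ m : ℕ, (t ^ m) x = x ^ (c ^ m) := by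
    intro m
    induction m with
    | zero => simp
    | succ m ih =>
      rw [pow_succ, MulAut.mul_apply, htx2, map_zpow, ih, ← zpow_mul, pow_succ]
  set n : ℕ := Nat.card T with hn
  have hn1 : ¬ (p:ℤ) ∣ (n : ℤ) := by
    intro h
    have h' : p ∣ n := by exact_mod_cast h
    have := (hp.coprime_iff_not_dvd.mp hT.symm)
    exact this h'
  have htn : (t ^ n) = 1 := by
    have : (⟨t, ht⟩ : T) ^ n = 1 := pow_card_eq_one'
    have h2 := congrArg (Subtype.val) this
    simpa using h2
  have hcn : x ^ (c ^ n) = x := by rw [← hiter n, htn]; rfl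
  have hdvd : (p:ℤ) ^ i ∣ c ^ n - 1 := by
    have h1 : x ^ (c ^ n - 1) = 1 := by
      rw [zpow_sub, hcn, zpow_one, mul_inv_cancel]
    have := orderOf_dvd_iff_zpow_eq_one.mpr h1
    rw [hx] at this
    exact_mod_cast this
  have hc1 : (p:ℤ) ∣ c - 1 := by
    have h1 : c - 1 = u * (b - a) + (u * a + v * (p:ℤ)^i - 1) - v * (p:ℤ)^i := by ring
    rw [h1, huv]
    have hpi : (p:ℤ) ∣ (p:ℤ)^i := dvd_pow_self _ (by omega)
    exact dvd_sub (by simpa using hab.mul_left u) (hpi.mul_left v)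
  have hci : (p:ℤ) ^ i ∣ c - 1 := lift_cong p hp i n hn1 c hc1 hdvd
  obtain ⟨w, hw⟩ := hci
  have hw' : u * b - 1 = (p:ℤ)^i * w := by rw [← hc]; exact hw
  exact ⟨b * v + a * w, by linear_combination (-b) * huv + a * hw'⟩

end Grp

section Orb
set_option linter.unusedSectionVars false
variable {D : Type*} [CommGroup D] [Finite D]

private def orb (T : Subgroup (MulAut D)) (x : D) : Set D := {z : D | ∃ t ∈ T, t x = z}

private def cls (p : ℕ) (T : Subgroup (MulAut D)) (x : D) : Set D :=
  {z : D | ∃ t ∈ T, ∃ k : ℤ, t z = x ^ ((1 : ℤ) + k * p)}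

private lemma mem_orb_self (T : Subgroup (MulAut D)) (x : D) : x ∈ orb T x :=
  ⟨1, one_mem T, rfl⟩

private lemma orb_eq_of_mem {T : Subgroup (MulAut D)} {x z : D} (h : z ∈ orb T x) :
    orb T x = orb T z := by
  obtain ⟨t, ht, htz⟩ := h
  ext w
  constructor
  · rintro ⟨s, hs, rfl⟩
    exact ⟨s * t⁻¹, mul_mem hs (inv_mem ht), by rw [MulAut.mul_apply, ← htz]; simp⟩
  · rintro ⟨s, hs, rfl⟩
    exact ⟨s * t, mul_mem hs ht, by rw [MulAut.mul_apply, htz]⟩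

private lemma mem_cls_self (p : ℕ) (T : Subgroup (MulAut D)) (x : D) : x ∈ cls p T x :=
  ⟨1, one_mem T, 0, by simp⟩

private lemma cls_trans (p : ℕ) (T : Subgroup (MulAut D)) {x z w : D}
    (hz : z ∈ cls p T x) (hw : w ∈ cls p T z) : w ∈ cls p T x := by
  obtain ⟨t, ht, k, htk⟩ := hz
  obtain ⟨s, hs, m, hsm⟩ := hw
  refine ⟨t * s, mul_mem ht hs, k + m + k * m * p, ?_⟩
  rw [MulAut.mul_apply, hsm, map_zpow, htk, ← zpow_mul]
  congr 1
  push_cast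
  ring

private lemma cls_symm (p : ℕ) (hp : p.Prime) (T : Subgroup (MulAut D)) (i : ℕ) (hi : 1 ≤ i)
    {x z : D} (hx : orderOf x = p ^ i) (hz : z ∈ cls p T x) : x ∈ cls p T z := by
  obtain ⟨t, ht, k, htk⟩ := hz
  obtain ⟨u, v, huv⟩ := coprime_inv p hp i (1 + k * p) (not_dvd_one_add p hp k)
  have hxpi : x ^ (((p:ℤ))^i) = 1 := by
    have := zpow_orderOf_cast x
    rw [hx] at this; exact_mod_cast this
  -- p ∣ u - 1
  have hu1 : (p:ℤ) ∣ u - 1 := by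
    have h1 : u - 1 = -(u * k) * p - v * (p:ℤ)^i + (u * (1 + k * p) + v * (p:ℤ)^i - 1) := by ring
    rw [h1, huv]
    have hpi : (p:ℤ) ∣ (p:ℤ)^i := dvd_pow_self _ (by omega)
    simpa using dvd_sub (⟨-(u*k), by ring⟩ : (p:ℤ) ∣ -(u*k) * p) (hpi.mul_left v)
  obtain ⟨k', hk'⟩ := hu1
  -- z = (t⁻¹ x) ^ (1 + k * p)
  have hz1 : z = (t⁻¹ x) ^ ((1:ℤ) + k * p) := by
    rw [← map_zpow, ← htk]
    simp
  have hxinv : t⁻¹ x = z ^ u := by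
    rw [hz1, ← zpow_mul]
    have hmul : ((1:ℤ) + k * p) * u = 1 - v * (p:ℤ)^i := by linarith
    rw [hmul, zpow_sub, zpow_one, mul_comm v, zpow_mul]
    have : (t⁻¹ x) ^ ((p:ℤ)^i) = 1 := by rw [← map_zpow, hxpi, map_one]
    rw [this, one_zpow, inv_one, mul_one]
  refine ⟨t⁻¹, inv_mem ht, k', ?_⟩
  rw [hxinv]
  congr 1
  linarith

private lemma cls_eq_of_mem (p : ℕ) (hp : p.Prime) (T : Subgroup (MulAut D)) (i : ℕ) (hi : 1 ≤ i)
    {x z : D} (hx : orderOf x = p ^ i) (hz : z ∈ cls p T x) : cls p T x = cls p T z := by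
  ext w
  constructor
  · intro hw
    exact cls_trans p T (cls_symm p hp T i hi hx hz) hw
  · intro hw
    exact cls_trans p T hz hw

private lemma orderOf_of_mem_cls (p : ℕ) (hp : p.Prime) (T : Subgroup (MulAut D)) (i : ℕ)
    {x z : D} (hx : orderOf x = p ^ i) (hz : z ∈ cls p T x) : orderOf z = p ^ i := by
  obtain ⟨t, ht, k, htk⟩ := hz
  have h1 : orderOf (t z) = orderOf z := orderOf_injective t.toMonoidHom t.injective z
  rw [htk] at h1
  rw [← h1]
  exact orderOf_zpow_coprime p hp i x hx _ (not_dvd_one_add p hp k)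

private lemma orb_subset_cls (p : ℕ) (T : Subgroup (MulAut D)) {x z : D} (h : z ∈ orb T x) :
    z ∈ cls p T x := by
  obtain ⟨t, ht, htz⟩ := h
  exact ⟨t⁻¹, inv_mem ht, 0, by rw [← htz]; simp⟩

end Orb

section Count
set_option linter.unusedSectionVars false
variable {D : Type*} [CommGroup D] [Finite D]

private lemma reduce_exp (p : ℕ) (hp : p.Prime) (i : ℕ) (hi : 1 ≤ i) (x : D)
    (hx : orderOf x = p ^ i) (k : ℤ) :
    ∃ j : Fin (p ^ (i - 1)), x ^ ((1:ℤ) + k * p) = x ^ ((1:ℤ) + ((j : ℕ) : ℤ) * p) := by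
  have hppos : (0:ℤ) < (p:ℤ) := by exact_mod_cast hp.pos
  have hm : (0:ℤ) < (p:ℤ) ^ (i - 1) := pow_pos hppos _
  set m : ℤ := (p:ℤ) ^ (i - 1) with hmdef
  have hr0 : 0 ≤ k % m := Int.emod_nonneg k hm.ne'
  have hrlt : k % m < m := Int.emod_lt_of_pos k hm
  have hcast : ((p ^ (i - 1) : ℕ) : ℤ) = m := by rw [hmdef]; push_cast; ring
  have hjlt : (k % m).toNat < p ^ (i - 1) := by omega
  refine ⟨⟨(k % m).toNat, hjlt⟩, ?_⟩
  apply zpow_eq_of_dvd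
  have hord : ((orderOf x : ℕ) : ℤ) = (p:ℤ) ^ i := by rw [hx]; push_cast; ring
  rw [hord]
  have hcoe : (((⟨(k % m).toNat, hjlt⟩ : Fin (p ^ (i-1))) : ℕ) : ℤ) = k % m := by
    simp [Int.toNat_of_nonneg hr0]
  rw [hcoe]
  have h1 : (1 + k * (p:ℤ)) - (1 + (k % m) * p) = (m * (k / m)) * p := by
    rw [Int.emod_def]; ring
  rw [h1]
  have h2 : (p:ℤ) ^ i = m * p := by
    rw [hmdef, ← pow_succ]
    congr 1
    omega
  rw [h2]
  exact mul_dvd_mul_right (dvd_mul_right m (k / m)) p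

private lemma orb_inj (p : ℕ) (hp : p.Prime) (T : Subgroup (MulAut D))
    (hT : (Nat.card T).Coprime p) (i : ℕ) (hi : 1 ≤ i) (x : D) (hx : orderOf x = p ^ i) :
    Function.Injective (fun j : Fin (p ^ (i - 1)) => orb T (x ^ ((1:ℤ) + ((j : ℕ) : ℤ) * p))) := by
  intro j j' h
  simp only at h
  have hmem : x ^ ((1:ℤ) + ((j' : ℕ) : ℤ) * p) ∈ orb T (x ^ ((1:ℤ) + ((j : ℕ) : ℤ) * p)) := by
    rw [h]; exact mem_orb_self T _
  obtain ⟨t, ht, htj⟩ := hmem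
  have hkey := key_rigid p hp T hT i hi x hx t ht _ _ (not_dvd_one_add p hp j)
    (⟨(j':ℤ) - (j:ℤ), by push_cast; ring⟩) htj
  have hsub : (1 + ((j' : ℕ) : ℤ) * p) - (1 + ((j : ℕ) : ℤ) * p) = (((j':ℕ):ℤ) - ((j:ℕ):ℤ)) * p := by
    ring
  rw [hsub] at hkey
  have hdvd : ((p:ℤ) ^ (i - 1)) ∣ (((j':ℕ):ℤ) - ((j:ℕ):ℤ)) := by
    have h2 : (p:ℤ) ^ i = (p:ℤ)^(i-1) * p := by rw [← pow_succ]; congr 1; omega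
    rw [h2] at hkey
    have hpne : (p:ℤ) ≠ 0 := by
      have := hp.pos; positivity
    exact (mul_dvd_mul_iff_right hpne).mp hkey
  have hz : (((j':ℕ):ℤ) - ((j:ℕ):ℤ)) = 0 := by
    apply Int.eq_zero_of_abs_lt_dvd hdvd
    have hb1 : ((j:ℕ):ℤ) < ((p ^ (i-1) : ℕ) : ℤ) := by exact_mod_cast j.isLt
    have hb2 : ((j':ℕ):ℤ) < ((p ^ (i-1) : ℕ) : ℤ) := by exact_mod_cast j'.isLt
    have hc : ((p ^ (i - 1) : ℕ) : ℤ) = (p:ℤ)^(i-1) := by push_cast; ring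
    rw [hc] at hb1 hb2
    have : (0:ℤ) ≤ ((j:ℕ):ℤ) := Int.natCast_nonneg _
    have : (0:ℤ) ≤ ((j':ℕ):ℤ) := Int.natCast_nonneg _
    rw [abs_lt]
    constructor <;> linarith
  have : (j:ℕ) = (j':ℕ) := by omega
  exact Fin.ext this

private lemma range_eq (p : ℕ) (hp : p.Prime) (T : Subgroup (MulAut D))
    (i : ℕ) (hi : 1 ≤ i) (x : D) (hx : orderOf x = p ^ i) :
    Set.range (fun j : Fin (p ^ (i - 1)) => orb T (x ^ ((1:ℤ) + ((j : ℕ) : ℤ) * p)))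
      = {s : Set D | ∃ y : D, y ∈ cls p T x ∧ s = orb T y} := by
  ext s
  constructor
  · rintro ⟨j, rfl⟩
    exact ⟨x ^ ((1:ℤ) + ((j : ℕ) : ℤ) * p), ⟨1, one_mem T, ((j:ℕ):ℤ), by simp⟩, rfl⟩
  · rintro ⟨y, ⟨t, ht, k, htk⟩, rfl⟩
    obtain ⟨j, hj⟩ := reduce_exp p hp i hi x hx k
    refine ⟨j, ?_⟩
    simp only
    rw [← hj, ← htk]
    exact (orb_eq_of_mem ⟨t, ht, rfl⟩).symm

end Count

theorem stmt_2 (p : ℕ) (hp : p.Prime) (D : Type*) [CommGroup D] [Finite D]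
    (hD : IsPGroup p D)
    (T : Subgroup (MulAut D)) (hT : (Nat.card T).Coprime p)
    (i : ℕ) (hi : 1 ≤ i) :
    (∀ x : D, orderOf x = p ^ i →
      Set.ncard {s : Set D |
        ∃ y : D, (∃ t ∈ T, ∃ k : ℤ, t y = x ^ ((1 : ℤ) + k * p)) ∧
          s = {z : D | ∃ t ∈ T, t y = z}} = p ^ (i - 1)) ∧
    Set.ncard {s : Set D | ∃ x : D, orderOf x = p ^ i ∧
        s = {z : D | ∃ t ∈ T, t x = z}}
      = p ^ (i - 1) *
        Set.ncard {s : Set D | ∃ x : D, orderOf x = p ^ i ∧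
          s = {z : D | ∃ t ∈ T, ∃ k : ℤ, t z = x ^ ((1 : ℤ) + k * p)}} := by
  constructor
  · intro x hx
    show Set.ncard {s : Set D | ∃ y : D, y ∈ cls p T x ∧ s = orb T y} = p ^ (i - 1)
    rw [← range_eq p hp T i hi x hx, ← Nat.card_coe_set_eq,
      Nat.card_range_of_injective (orb_inj p hp T hT i hi x hx), Nat.card_eq_fintype_card,
      Fintype.card_fin]
  · show Set.ncard {s : Set D | ∃ x : D, orderOf x = p ^ i ∧ s = orb T x}
      = p ^ (i - 1) * Set.ncard {s : Set D | ∃ x : D, orderOf x = p ^ i ∧ s = cls p T x}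
    set C : Set (Set D) := {s : Set D | ∃ x : D, orderOf x = p ^ i ∧ s = cls p T x} with hC
    set O : Set (Set D) := {s : Set D | ∃ x : D, orderOf x = p ^ i ∧ s = orb T x} with hO
    have hmemC : ∀ c ∈ C, ∃ x : D, orderOf x = p ^ i ∧ c = cls p T x := fun c hc => hc
    let G : ↥C × Fin (p ^ (i - 1)) → ↥O := fun a =>
      ⟨orb T ((hmemC a.1.1 a.1.2).choose ^ ((1:ℤ) + ((a.2 : ℕ) : ℤ) * p)),
        ⟨_, orderOf_zpow_coprime p hp i _ (hmemC a.1.1 a.1.2).choose_spec.1 _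
            (not_dvd_one_add p hp _), rfl⟩⟩
    have hGinj : Function.Injective G := by
      rintro ⟨⟨c, hc⟩, j⟩ ⟨⟨c', hc'⟩, j'⟩ hab
      have hval := congrArg Subtype.val hab
      simp only [G] at hval
      set x₀ := (hmemC c hc).choose with hx₀def
      set x₁ := (hmemC c' hc').choose with hx₁def
      have hx₀ := (hmemC c hc).choose_spec.1
      have hx₁ := (hmemC c' hc').choose_spec.1
      have hmem : x₁ ^ ((1:ℤ) + ((j' : ℕ) : ℤ) * p) ∈
          orb T (x₀ ^ ((1:ℤ) + ((j : ℕ) : ℤ) * p)) := by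
        rw [hval]; exact mem_orb_self T _
      obtain ⟨t, ht, htt⟩ := hmem
      have m1 : x₀ ^ ((1:ℤ) + ((j : ℕ) : ℤ) * p) ∈ cls p T x₁ := ⟨t, ht, ((j' : ℕ) : ℤ), htt⟩
      have m0 : x₀ ^ ((1:ℤ) + ((j : ℕ) : ℤ) * p) ∈ cls p T x₀ := ⟨1, one_mem T, ((j : ℕ) : ℤ), by simp⟩
      have hcls : cls p T x₀ = cls p T x₁ := by
        rw [cls_eq_of_mem p hp T i hi hx₀ m0, cls_eq_of_mem p hp T i hi hx₁ m1]
      have hcc' : c = c' := by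
        rw [(hmemC c hc).choose_spec.2, (hmemC c' hc').choose_spec.2, ← hx₀def, ← hx₁def, hcls]
      subst hcc'
      have hx01 : x₀ = x₁ := rfl
      have hj : j = j' := by
        apply orb_inj p hp T hT i hi x₀ hx₀
        show orb T (x₀ ^ ((1:ℤ) + ((j : ℕ) : ℤ) * p)) = orb T (x₀ ^ ((1:ℤ) + ((j' : ℕ) : ℤ) * p))
        exact hval
      simp only [Prod.mk.injEq, Subtype.mk.injEq]
      exact ⟨trivial, hj⟩
    have hGsurj : Function.Surjective G := by
      rintro ⟨s, hs⟩
      obtain ⟨y, hy, hsy⟩ := hs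
      have hc : (cls p T y) ∈ C := ⟨y, hy, rfl⟩
      have hx₀ := (hmemC _ hc).choose_spec.1
      have he : cls p T y = cls p T (hmemC _ hc).choose := (hmemC _ hc).choose_spec.2
      have hymem : y ∈ cls p T (hmemC _ hc).choose := he ▸ mem_cls_self p T y
      obtain ⟨t, ht, k, htk⟩ := hymem
      obtain ⟨j, hj⟩ := reduce_exp p hp i hi _ hx₀ k
      refine ⟨⟨⟨cls p T y, hc⟩, j⟩, ?_⟩
      apply Subtype.ext
      show orb T ((hmemC _ hc).choose ^ ((1:ℤ) + ((j : ℕ) : ℤ) * p)) = s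
      rw [hsy, ← hj, ← htk]
      exact (orb_eq_of_mem ⟨t, ht, rfl⟩).symm
    have hcard := Nat.card_eq_of_bijective G ⟨hGinj, hGsurj⟩
    have hfin : Nat.card (Fin (p ^ (i - 1))) = p ^ (i - 1) := by
      rw [Nat.card_eq_fintype_card, Fintype.card_fin]
    rw [← Nat.card_coe_set_eq, ← Nat.card_coe_set_eq, ← hcard, Nat.card_prod, hfin,
      mul_comm]
end

section
/- Let p be a prime, D ≅ C_{p^2} × C_{p^2}, and T ≤ Aut(D) a p'-group. With the equivalence x ~ y iff ∃ t ∈ T, k ∈ ℤ with t(x) = y^{1+kp}, let d_1 (resp. d_2) be the number of equivalence classes of elements of order p (resp. p^2). Then d_1 ≤ d_2. -/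
namespace Stmt3Aux

variable {p : ℕ}

abbrev G (p : ℕ) := Multiplicative (ZMod (p ^ 2) × ZMod (p ^ 2))

lemma pow_card (g : G p) : g ^ (p ^ 2) = 1 := by
  have h : Multiplicative.toAdd (g ^ (p ^ 2)) = 0 := by
    rw [toAdd_pow]
    ext <;> simp [nsmul_eq_mul]
    all_goals rw [← Nat.cast_pow, ZMod.natCast_self, zero_mul]
  exact Multiplicative.toAdd.injective (by simp [h])

lemma zpow_eq (g : G p) {m n : ℤ} (h : ((p ^ 2 : ℕ) : ℤ) ∣ m - n) : g ^ m = g ^ n := by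
  obtain ⟨c, hc⟩ := h
  have hm : m = n + (p ^ 2 : ℕ) * c := by linarith
  rw [hm, zpow_add, zpow_mul, zpow_natCast, pow_card g, one_zpow, mul_one]

variable (T : Subgroup (MulAut (G p)))

def cls (x : G p) : Set (G p) :=
  {z | ∃ t ∈ T, ∃ k : ℤ, t z = x ^ ((1 : ℤ) + k * p)}

lemma mem_cls_self (x : G p) : x ∈ cls T x :=
  ⟨1, one_mem T, 0, by simp⟩

lemma cls_symm {x y : G p} (h : x ∈ cls T y) : y ∈ cls T x := by
  obtain ⟨t, ht, k, hk⟩ := h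
  refine ⟨t⁻¹, inv_mem ht, -k, ?_⟩
  have key : t (x ^ ((1 : ℤ) + (-k) * p)) = y := by
    rw [map_zpow, hk, ← zpow_mul]
    have : y ^ (((1 : ℤ) + k * p) * ((1 : ℤ) + (-k) * p)) = y ^ (1 : ℤ) := by
      apply zpow_eq
      exact ⟨-k ^ 2, by push_cast; ring⟩
    simpa using this
  rw [← key]
  simp

lemma cls_trans {z x y : G p} (h1 : z ∈ cls T x) (h2 : x ∈ cls T y) : z ∈ cls T y := by
  obtain ⟨t1, ht1, k1, hk1⟩ := h1
  obtain ⟨t2, ht2, k2, hk2⟩ := h2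
  refine ⟨t2 * t1, mul_mem ht2 ht1, k1 + k2 + k1 * k2 * p, ?_⟩
  have : (t2 * t1) z = (t2 : MulAut (G p)) (t1 z) := rfl
  rw [this, hk1, map_zpow, hk2, ← zpow_mul]
  congr 1
  ring

lemma cls_eq_of_mem {x y : G p} (h : x ∈ cls T y) : cls T x = cls T y := by
  ext z
  exact ⟨fun hz => cls_trans T hz h, fun hz => cls_trans T hz (cls_symm T h)⟩

lemma cls_pow {x y : G p} (h : x ∈ cls T y) : x ^ p ∈ cls T (y ^ p) := by
  obtain ⟨t, ht, k, hk⟩ := h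
  refine ⟨t, ht, k, ?_⟩
  rw [map_pow, hk, ← zpow_natCast (y ^ ((1:ℤ) + k * p)), ← zpow_mul, mul_comm, zpow_mul,
    zpow_natCast]

lemma exists_root (hp : p.Prime) {x : G p} (hx : orderOf x = p) :
    ∃ y : G p, y ^ p = x ∧ orderOf y = p ^ 2 := by
  haveI : NeZero (p ^ 2) := ⟨pow_ne_zero 2 hp.ne_zero⟩
  have hxp : x ^ p = 1 := by
    have h := pow_orderOf_eq_one x; rwa [hx] at h
  have hcomp : ∀ a : ZMod (p ^ 2), (p : ZMod (p ^ 2)) * a = 0 →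
      ∃ b : ZMod (p ^ 2), (p : ZMod (p ^ 2)) * b = a := by
    intro a ha
    have h1 : ((p * a.val : ℕ) : ZMod (p ^ 2)) = 0 := by
      push_cast
      simpa [ZMod.natCast_val, ZMod.cast_id] using ha
    have h2 : p ^ 2 ∣ p * a.val := (ZMod.natCast_eq_zero_iff _ _).mp h1
    have h3 : p ∣ a.val := by
      rcases h2 with ⟨c, hc⟩
      have h4 : p * a.val = p * (p * c) := by rw [hc]; ring
      exact ⟨c, Nat.eq_of_mul_eq_mul_left hp.pos h4⟩
    rcases h3 with ⟨c, hc⟩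
    refine ⟨(c : ZMod (p ^ 2)), ?_⟩
    rw [← Nat.cast_mul, ← hc]
    simp [ZMod.natCast_val, ZMod.cast_id]
  have h0 : (p : ℕ) • Multiplicative.toAdd x = 0 := by
    have := congrArg Multiplicative.toAdd hxp
    rw [toAdd_pow] at this
    simpa using this
  obtain ⟨b1, hb1⟩ := hcomp (Multiplicative.toAdd x).1 (by
    have := congrArg Prod.fst h0
    simpa [nsmul_eq_mul] using this)
  obtain ⟨b2, hb2⟩ := hcomp (Multiplicative.toAdd x).2 (by
    have := congrArg Prod.snd h0
    simpa [nsmul_eq_mul] using this)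
  set y := Multiplicative.ofAdd (b1, b2) with hy
  have hyp : y ^ p = x := by
    apply Multiplicative.toAdd.injective
    rw [toAdd_pow]
    ext <;> simp [y, nsmul_eq_mul, hb1, hb2]
  refine ⟨y, hyp, ?_⟩
  have hx1 : x ≠ 1 := by
    intro h
    rw [h, orderOf_one] at hx
    exact hp.one_lt.ne' hx.symm
  have hdvd : orderOf y ∣ p ^ 2 := orderOf_dvd_of_pow_eq_one (pow_card y)
  rcases (Nat.dvd_prime_pow hp).mp hdvd with ⟨i, hi, hoy⟩
  interval_cases i
  · rw [pow_zero, orderOf_eq_one_iff] at hoy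
    exact absurd (by rw [← hyp, hoy, one_pow]) hx1
  · rw [pow_one] at hoy
    have h5 := pow_orderOf_eq_one y
    rw [hoy, hyp] at h5
    exact absurd h5 hx1
  · exact hoy

open Classical in
noncomputable def liftCls (hp : p.Prime) (s : Set (G p)) : Set (G p) :=
  if h : ∃ x, orderOf x = p ∧ s = cls T x then
    cls T (Classical.choose (exists_root hp h.choose_spec.1))
  else s

lemma liftCls_spec (hp : p.Prime) {s : Set (G p)}
    (hs : ∃ x, orderOf x = p ∧ s = cls T x) :
    ∃ y : G p, orderOf y = p ^ 2 ∧ liftCls T hp s = cls T y ∧ s = cls T (y ^ p) := by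
  obtain ⟨hy1, hy2⟩ := Classical.choose_spec (exists_root hp hs.choose_spec.1)
  exact ⟨_, hy2, dif_pos hs, by rw [hy1]; exact hs.choose_spec.2⟩

end Stmt3Aux

theorem stmt_3 (p : ℕ) (hp : p.Prime)
    (T : Subgroup (MulAut (Multiplicative (ZMod (p ^ 2) × ZMod (p ^ 2)))))
    (hT : (Nat.card T).Coprime p) :
    Set.ncard {s : Set (Multiplicative (ZMod (p ^ 2) × ZMod (p ^ 2))) |
        ∃ x, orderOf x = p ∧
          s = {z | ∃ t ∈ T, ∃ k : ℤ, t z = x ^ ((1 : ℤ) + k * p)}} ≤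
    Set.ncard {s : Set (Multiplicative (ZMod (p ^ 2) × ZMod (p ^ 2))) |
        ∃ x, orderOf x = p ^ 2 ∧
          s = {z | ∃ t ∈ T, ∃ k : ℤ, t z = x ^ ((1 : ℤ) + k * p)}} := by
  haveI : NeZero (p ^ 2) := ⟨pow_ne_zero 2 hp.ne_zero⟩
  show Set.ncard {s | ∃ x, orderOf x = p ∧ s = Stmt3Aux.cls T x} ≤
    Set.ncard {s | ∃ x, orderOf x = p ^ 2 ∧ s = Stmt3Aux.cls T x}
  apply Set.ncard_le_ncard_of_injOn (Stmt3Aux.liftCls T hp)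
  · rintro s hs
    obtain ⟨y, hy2, hlift, -⟩ := Stmt3Aux.liftCls_spec T hp hs
    exact ⟨y, hy2, hlift⟩
  · rintro s1 hs1 s2 hs2 heq
    obtain ⟨y1, hy12, hl1, he1⟩ := Stmt3Aux.liftCls_spec T hp hs1
    obtain ⟨y2, hy22, hl2, he2⟩ := Stmt3Aux.liftCls_spec T hp hs2
    rw [hl1, hl2] at heq
    have hm : y1 ∈ Stmt3Aux.cls T y2 := heq ▸ Stmt3Aux.mem_cls_self T y1
    rw [he1, he2]
    exact Stmt3Aux.cls_eq_of_mem T (Stmt3Aux.cls_pow T hm)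
end

section
/- Let e ≥ 3 and let ζ ∈ ℂ be a primitive 2^e-th root of unity. Then ζ + ζ^{-1} does not lie in the cyclotomic field ℚ(ζ_{2^{e-1}}), and ζ - ζ^{-1} does not lie in ℚ(ζ_{2^{e-1}}). -/
open IntermediateField Polynomial

lemma finrank_adjoin_prim (n : ℕ+) (x : ℂ) (hx : IsPrimitiveRoot x (n : ℕ)) :
    Module.finrank ℚ ℚ⟮x⟯ = (n : ℕ).totient := by
  have hint : IsIntegral ℚ x := (hx.isIntegral n.pos).tower_top
  have H := IntermediateField.adjoin_simple_toSubalgebra_of_isAlgebraic hint.isAlgebraic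
  haveI : IsCyclotomicExtension {(n : ℕ)} ℚ (Algebra.adjoin ℚ ({x} : Set ℂ)) := by
    have : IsPrimitiveRoot x (n : ℕ+) := hx
    exact this.adjoin_isCyclotomicExtension ℚ
  haveI : IsCyclotomicExtension {(n : ℕ)} ℚ ℚ⟮x⟯ := by
    refine IsCyclotomicExtension.equiv _ _ _ (h := ?_) (.refl : ℚ⟮x⟯.toSubalgebra ≃ₐ[ℚ] _)
    rw [H]
    infer_instance
  exact IsCyclotomicExtension.finrank (n := (n : ℕ)) ℚ⟮x⟯ (Polynomial.cyclotomic.irreducible_rat n.pos)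

noncomputable def realIF : IntermediateField ℚ ℂ :=
  Subfield.toIntermediateField Complex.ofRealHom.fieldRange
    (fun x => ⟨(x : ℝ), by simp⟩)

lemma mem_realIF_iff {z : ℂ} : z ∈ realIF ↔ (starRingEnd ℂ) z = z := by
  rw [Complex.conj_eq_iff_real]
  constructor
  · rintro ⟨r, hr⟩; exact ⟨r, hr.symm⟩
  · rintro ⟨r, hr⟩; exact ⟨r, hr.symm⟩

set_option maxHeartbeats 1000000 in
set_option synthInstance.maxHeartbeats 200000 in
lemma key (e : ℕ) (he : 3 ≤ e) (η ζ' : ℂ)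
    (hη : IsPrimitiveRoot η (2 ^ e)) (hζ' : IsPrimitiveRoot ζ' (2 ^ (e - 1))) :
    η + η⁻¹ ∉ ℚ⟮ζ'⟯ := by
  intro hmem
  set α : ℂ := η + η⁻¹ with hα
  have hη0 : η ≠ 0 := hη.ne_zero (by positivity)
  have habs : ‖η‖ = 1 := hη.norm'_eq_one (by positivity)
  have hconj : (starRingEnd ℂ) η = η⁻¹ := (Complex.inv_eq_conj habs).symm
  have hαreal : (starRingEnd ℂ) α = α := by
    rw [hα, map_add, hconj, map_inv₀, hconj, inv_inv, add_comm]
  -- degrees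
  have h2 : (2:ℕ) ≤ e := by omega
  have hKdeg : Module.finrank ℚ ℚ⟮ζ'⟯ = 2 ^ (e - 2) := by
    have := finrank_adjoin_prim ⟨2 ^ (e - 1), by positivity⟩ ζ' (by exact_mod_cast hζ')
    rw [this]
    show ((2:ℕ) ^ (e-1)).totient = 2 ^ (e - 2)
    have h' : e - 1 = (e - 2) + 1 := by omega
    rw [h', Nat.totient_prime_pow Nat.prime_two (by omega)]
    simp
  have hEdeg : Module.finrank ℚ ℚ⟮η⟯ = 2 ^ (e - 1) := by
    have := finrank_adjoin_prim ⟨2 ^ e, by positivity⟩ η (by exact_mod_cast hη)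
    rw [this]
    show ((2:ℕ) ^ e).totient = 2 ^ (e - 1)
    have h' : e = (e - 1) + 1 := by omega
    rw [h', Nat.totient_prime_pow Nat.prime_two (by omega)]
    simp [← h']
  -- F = ℚ(α)
  have hαint : IsIntegral ℚ α := by
    have h1 : IsIntegral ℚ η := ((hη.isIntegral (by positivity)).tower_top : IsIntegral ℚ η)
    have h2 : IsIntegral ℚ η⁻¹ := by
      have hmul : η * η ^ (2 ^ e - 1) = 1 := by
        rw [← pow_succ', Nat.sub_add_cancel Nat.one_le_two_pow]
        exact hη.pow_eq_one
      rw [inv_eq_of_mul_eq_one_right hmul]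
      exact h1.pow _
    exact h1.add h2
  set F : IntermediateField ℚ ℂ := ℚ⟮α⟯ with hF
  haveI : FiniteDimensional ℚ F := IntermediateField.adjoin.finiteDimensional hαint
  -- η is quadratic over F
  have hαF : α ∈ F := IntermediateField.mem_adjoin_simple_self ℚ α
  set p : Polynomial F := X ^ 2 + (C (-⟨α, hαF⟩) * X + 1) with hp
  have hpmonic : p.Monic := by
    apply Polynomial.monic_X_pow_add
    calc degree (C (-(⟨α, hαF⟩ : F)) * X + 1) ≤ 1 := by
          simpa using Polynomial.degree_linear_le (a := -(⟨α, hαF⟩ : F)) (b := 1)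
      _ < ((2:ℕ) : WithBot ℕ) := by decide
  have hpaeval : Polynomial.aeval η p = 0 := by
    have halg : algebraMap F ℂ ⟨α, hαF⟩ = α := rfl
    simp only [hp, map_add, map_mul, map_pow, Polynomial.aeval_X, Polynomial.aeval_C,
      map_neg, halg, map_one]
    rw [hα]; field_simp
    ring
  have hηintF : IsIntegral F η := ⟨p, hpmonic, hpaeval⟩
  have hηFdeg : Module.finrank F F⟮η⟯ ≤ 2 := by
    rw [IntermediateField.adjoin.finrank hηintF]
    have hdeg : (minpoly F η).degree ≤ p.degree :=
      minpoly.degree_le_of_ne_zero F η hpmonic.ne_zero hpaeval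
    have hpdeg : p.degree = 2 := by
      rw [hp]
      compute_degree!
    have h2' : (minpoly F η).degree ≤ 2 := hdeg.trans (le_of_eq hpdeg)
    exact Polynomial.natDegree_le_iff_degree_le.mpr h2'
  haveI : FiniteDimensional F F⟮η⟯ := IntermediateField.adjoin.finiteDimensional hηintF
  -- tower
  have hmul : Module.finrank ℚ F * Module.finrank F F⟮η⟯
      = Module.finrank ℚ F⟮η⟯ := Module.finrank_mul_finrank ℚ F F⟮η⟯
  have hle : ℚ⟮η⟯ ≤ IntermediateField.restrictScalars ℚ F⟮η⟯ := by
    rw [IntermediateField.adjoin_simple_le_iff]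
    exact IntermediateField.mem_adjoin_simple_self F η
  haveI : FiniteDimensional ℚ F⟮η⟯ := FiniteDimensional.trans ℚ F F⟮η⟯
  have hmono : Module.finrank ℚ ℚ⟮η⟯
      ≤ Module.finrank ℚ (IntermediateField.restrictScalars ℚ F⟮η⟯) := by
    have : FiniteDimensional ℚ (IntermediateField.restrictScalars ℚ F⟮η⟯) := by
      show FiniteDimensional ℚ F⟮η⟯; infer_instance
    haveI : Module.Finite ℚ
        ↥(Subalgebra.toSubmodule (IntermediateField.restrictScalars ℚ F⟮η⟯).toSubalgebra) :=
      inferInstanceAs (FiniteDimensional ℚ F⟮η⟯)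
    have hle' : Subalgebra.toSubmodule ℚ⟮η⟯.toSubalgebra
        ≤ Subalgebra.toSubmodule (IntermediateField.restrictScalars ℚ F⟮η⟯).toSubalgebra := by
      exact_mod_cast hle
    exact Submodule.finrank_mono hle'
  have hFdeg : 2 ^ (e - 2) ≤ Module.finrank ℚ F := by
    have h1 : (2:ℕ) ^ (e - 1) ≤ Module.finrank ℚ F * 2 := by
      calc (2:ℕ) ^ (e - 1) = Module.finrank ℚ ℚ⟮η⟯ := hEdeg.symm
        _ ≤ Module.finrank ℚ (IntermediateField.restrictScalars ℚ F⟮η⟯) := hmono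
        _ = Module.finrank ℚ F⟮η⟯ := rfl
        _ = Module.finrank ℚ F * Module.finrank F F⟮η⟯ := hmul.symm
        _ ≤ Module.finrank ℚ F * 2 := Nat.mul_le_mul_left _ hηFdeg
    have h2' : (2:ℕ) ^ (e - 1) = 2 ^ (e - 2) * 2 := by
      rw [← pow_succ]; congr 1; omega
    rw [h2'] at h1
    exact Nat.le_of_mul_le_mul_right h1 (by norm_num)
  have hFK : F ≤ ℚ⟮ζ'⟯ := by
    rw [hF, IntermediateField.adjoin_simple_le_iff]; exact hmem
  haveI : FiniteDimensional ℚ ℚ⟮ζ'⟯ :=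
    IntermediateField.adjoin.finiteDimensional ((hζ'.isIntegral (by positivity)).tower_top)
  have heq : F = ℚ⟮ζ'⟯ :=
    IntermediateField.eq_of_le_of_finrank_le hFK (by rw [hKdeg]; exact hFdeg)
  have hζ'F : ζ' ∈ F := heq ▸ IntermediateField.mem_adjoin_simple_self ℚ ζ'
  have hFreal : F ≤ realIF := by
    rw [hF, IntermediateField.adjoin_simple_le_iff]; exact mem_realIF_iff.mpr hαreal
  have hcζ' : (starRingEnd ℂ) ζ' = ζ' := mem_realIF_iff.mp (hFreal hζ'F)
  have hζ'0 : ζ' ≠ 0 := hζ'.ne_zero (by positivity)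
  have habs' : ‖ζ'‖ = 1 := hζ'.norm'_eq_one (by positivity)
  have hsq : ζ' ^ 2 = 1 := by
    have hinv : ζ'⁻¹ = ζ' := by rw [Complex.inv_eq_conj habs', hcζ']
    rw [sq]; nth_rewrite 1 [← hinv]; exact inv_mul_cancel₀ hζ'0
  have hdvd : 2 ^ (e - 1) ∣ 2 := hζ'.dvd_of_pow_eq_one 2 hsq
  have hle4 : (4:ℕ) ≤ 2 ^ (e - 1) := by
    calc (4:ℕ) = 2 ^ 2 := by norm_num
      _ ≤ 2 ^ (e - 1) := Nat.pow_le_pow_right (by norm_num) (by omega)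
  have := Nat.le_of_dvd (by norm_num) hdvd
  omega

lemma i_mem (e : ℕ) (he : 3 ≤ e) (ζ' : ℂ) (hζ' : IsPrimitiveRoot ζ' (2 ^ (e - 1))) :
    Complex.I ∈ ℚ⟮ζ'⟯ := by
  set μ : ℂ := ζ' ^ (2 ^ (e - 3)) with hμ
  have hμK : μ ∈ ℚ⟮ζ'⟯ := pow_mem (IntermediateField.mem_adjoin_simple_self ℚ ζ') _
  have hμ2 : μ ^ 2 = ζ' ^ (2 ^ (e - 2)) := by
    rw [hμ, ← pow_mul, ← pow_succ]
    congr 2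
    omega
  have hsq1 : (μ ^ 2) * (μ ^ 2) = 1 := by
    rw [hμ2, ← pow_add, ← two_mul, ← pow_succ']
    have : (e - 2) + 1 = e - 1 := by omega
    rw [this]
    exact hζ'.pow_eq_one
  have hne1 : μ ^ 2 ≠ 1 := by
    rw [hμ2]
    intro h
    have := hζ'.dvd_of_pow_eq_one _ h
    have h1 := Nat.le_of_dvd (by positivity) this
    have h2 : (2:ℕ) ^ (e - 2) < 2 ^ (e - 1) := Nat.pow_lt_pow_right (by norm_num) (by omega)
    omega
  have hμsq : μ ^ 2 = -1 := by
    rcases mul_self_eq_one_iff.mp hsq1 with h | h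
    · exact absurd h hne1
    · exact h
  have : (μ - Complex.I) * (μ + Complex.I) = 0 := by
    linear_combination hμsq - Complex.I_sq
  rcases mul_eq_zero.mp this with h | h
  · have : Complex.I = μ := by linear_combination -h
    rw [this]; exact hμK
  · have : Complex.I = -μ := by linear_combination h
    rw [this]; exact neg_mem hμK

lemma prim_of_two_pow (e : ℕ) (he : 1 ≤ e) (x : ℂ) (h1 : x ^ (2 ^ e) = 1)
    (h2 : x ^ (2 ^ (e - 1)) ≠ 1) : IsPrimitiveRoot x (2 ^ e) := by
  have hdvd : orderOf x ∣ 2 ^ e := orderOf_dvd_of_pow_eq_one h1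
  obtain ⟨k, hk, hke⟩ := (Nat.dvd_prime_pow Nat.prime_two).mp hdvd
  have hkeq : k = e := by
    by_contra hne
    have hk1 : k ≤ e - 1 := by omega
    apply h2
    apply orderOf_dvd_iff_pow_eq_one.mp
    rw [hke]
    exact pow_dvd_pow 2 hk1
  have horder : orderOf x = 2 ^ e := by rw [hke, hkeq]
  rw [← horder]
  exact IsPrimitiveRoot.orderOf x

theorem stmt_10 (e : ℕ) (he : 3 ≤ e) (ζ ζ' : ℂ)
    (hζ : IsPrimitiveRoot ζ (2 ^ e)) (hζ' : IsPrimitiveRoot ζ' (2 ^ (e - 1))) :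
    ζ + ζ⁻¹ ∉ ℚ⟮ζ'⟯ ∧ ζ - ζ⁻¹ ∉ ℚ⟮ζ'⟯ := by
  have hζ0 : ζ ≠ 0 := hζ.ne_zero (by positivity)
  refine ⟨key e he ζ ζ' hζ hζ', ?_⟩
  intro hmem
  -- η = I * ζ is a primitive 2^e-th root of unity
  have hI4 : Complex.I ^ 4 = 1 := by
    rw [(by norm_num : 4 = 2 * 2), pow_mul, Complex.I_sq]; norm_num
  have hIpow : ∀ m : ℕ, 2 ≤ m → Complex.I ^ (2 ^ m) = 1 := by
    intro m hm
    have : 2 ^ m = 4 * 2 ^ (m - 2) := by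
      rw [(by norm_num : (4:ℕ) = 2 ^ 2), ← pow_add]
      congr 1; omega
    rw [this, pow_mul, hI4, one_pow]
  have hζhalf : ζ ^ (2 ^ (e - 1)) = -1 := by
    have hsq : ζ ^ (2 ^ (e - 1)) * ζ ^ (2 ^ (e - 1)) = 1 := by
      rw [← pow_add, ← two_mul, ← pow_succ']
      have : (e - 1) + 1 = e := by omega
      rw [this]; exact hζ.pow_eq_one
    rcases mul_self_eq_one_iff.mp hsq with h | h
    · exfalso
      have := hζ.dvd_of_pow_eq_one _ h
      have h1 := Nat.le_of_dvd (by positivity) this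
      have h2 : (2:ℕ) ^ (e - 1) < 2 ^ e := Nat.pow_lt_pow_right (by norm_num) (by omega)
      omega
    · exact h
  set η : ℂ := Complex.I * ζ with hηdef
  have hη : IsPrimitiveRoot η (2 ^ e) := by
    apply prim_of_two_pow e (by omega)
    · rw [mul_pow, hIpow e (by omega), hζ.pow_eq_one, one_mul]
    · rw [mul_pow, hIpow (e - 1) (by omega), hζhalf, one_mul]
      intro h
      exact (by norm_num : (-1 : ℂ) ≠ 1) h
  -- η + η⁻¹ = I * (ζ - ζ⁻¹)
  have hid : η + η⁻¹ = Complex.I * (ζ - ζ⁻¹) := by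
    rw [hηdef, mul_inv, Complex.inv_I]
    field_simp
    ring
  have hImem := i_mem e he ζ' hζ'
  have : η + η⁻¹ ∈ ℚ⟮ζ'⟯ := by
    rw [hid]; exact mul_mem hImem hmem
  exact key e he η ζ' hη hζ' this
end

section
/- Let F be a field, k = |I_1| + ... + |I_n| where I_1,...,I_n is a partition of {1,...,k}, and A ∈ F^{k×k}. Then det A = Σ_J sgn(σ_J) · det(A_{J_1 I_1}) ⋯ det(A_{J_n I_n}), where the sum runs over all partitions J = (J_1,...,J_n) of {1,...,k} with |J_i| = |I_i| for all i, A_{J_i I_i} is the submatrix with rows indexed by J_i and columns by I_i, and σ_J is the unique permutation of {1,...,k} sending J_i to I_i order-preservingly for each i. -/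
open Finset Equiv

/-- inclusion of a fiber of a sigma type -/
def sigmaBlockEquiv {n : ℕ} {β : Fin n → Type*} (i : Fin n) :
    β i ≃ {x : Σ j, β j // x.1 = i} where
  toFun a := ⟨⟨i, a⟩, rfl⟩
  invFun x := x.2 ▸ x.1.2
  left_inv a := rfl
  right_inv := by rintro ⟨⟨j, b⟩, h⟩; subst h; rfl

lemma sigmaCongrRight_mulSingle {n : ℕ} {c : Fin n → ℕ} (i : Fin n) (π : Equiv.Perm (Fin (c i))) :
    Equiv.Perm.sigmaCongrRight (Pi.mulSingle i π) =
      π.extendDomain (p := fun x : Σ j, Fin (c j) => x.1 = i) (sigmaBlockEquiv (β := fun j => Fin (c j)) i) := by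
  refine Equiv.ext ?_
  rintro ⟨j, b⟩
  by_cases h : j = i
  · subst h
    rw [Equiv.Perm.extendDomain_apply_subtype _ (sigmaBlockEquiv (β := fun j => Fin (c j)) j) (show ((⟨j,b⟩ : Σ j, Fin (c j)).1 = j) from rfl)]
    simp [sigmaBlockEquiv, Equiv.Perm.sigmaCongrRight]
  · rw [Equiv.Perm.extendDomain_apply_not_subtype _ (sigmaBlockEquiv (β := fun j => Fin (c j)) i) h]
    simp [Equiv.Perm.sigmaCongrRight, Pi.mulSingle_eq_of_ne h]

lemma sign_sigmaCongrRight {n : ℕ} (c : Fin n → ℕ) (ρ : ∀ i, Equiv.Perm (Fin (c i))) :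
    Equiv.Perm.sign (Equiv.Perm.sigmaCongrRight ρ) = ∏ i, Equiv.Perm.sign (ρ i) := by
  classical
  let Ψ : (∀ i, Equiv.Perm (Fin (c i))) →* ℤˣ :=
    { toFun := fun ρ => ∏ i, Equiv.Perm.sign (ρ i)
      map_one' := by simp
      map_mul' := by intro a b; simp [Finset.prod_mul_distrib] }
  have h : (Equiv.Perm.sign.comp (Equiv.Perm.sigmaCongrRightHom (fun i => Fin (c i)))) = Ψ := by
    apply MonoidHom.pi_ext
    intro i x
    set f : ∀ j, Equiv.Perm (Fin (c j)) := Pi.mulSingle i x with hf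
    have h1 : (Equiv.Perm.sign.comp (Equiv.Perm.sigmaCongrRightHom (fun i => Fin (c i)))) f
        = Equiv.Perm.sign (Equiv.Perm.sigmaCongrRight f) := rfl
    rw [h1, hf, sigmaCongrRight_mulSingle, Equiv.Perm.sign_extendDomain]
    show Equiv.Perm.sign x = ∏ j, Equiv.Perm.sign (f j)
    rw [Finset.prod_eq_single i (fun j _ hj => by simp [hf, Pi.mulSingle_eq_of_ne hj]) (by simp)]
    simp [hf]
  exact DFunLike.congr_fun h ρ

/-- the enumeration equivalence of a partition into blocks -/
noncomputable def blockEquiv {k n : ℕ} (c : Fin n → ℕ) (J : Fin n → Finset (Fin k))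
    (hc : ∀ i, (J i).card = c i)
    (hdisj : ∀ i j, i ≠ j → Disjoint (J i) (J j))
    (hcover : Finset.univ.biUnion J = (Finset.univ : Finset (Fin k))) :
    (Σ i : Fin n, Fin (c i)) ≃ Fin k :=
  Equiv.ofBijective (fun p => ((J p.1).orderIsoOfFin (hc p.1) p.2 : Fin k)) (by
    constructor
    · rintro ⟨i, a⟩ ⟨j, b⟩ h
      dsimp at h
      have hi : (((J i).orderIsoOfFin (hc i) a : Fin k)) ∈ J i :=
        ((J i).orderIsoOfFin (hc i) a).2
      have hj : (((J j).orderIsoOfFin (hc j) b : Fin k)) ∈ J j :=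
        ((J j).orderIsoOfFin (hc j) b).2
      have hij : i = j := by
        by_contra hij
        exact Finset.disjoint_left.mp (hdisj i j hij) hi (by rw [show (((J i).orderIsoOfFin (hc i) a : Fin k)) = (((J j).orderIsoOfFin (hc j) b : Fin k)) from h]; exact hj)
      subst hij
      have : a = b := by
        have := ((J i).orderIsoOfFin (hc i)).injective (Subtype.ext h)
        exact this
      subst this; rfl
    · intro x
      have hx : x ∈ Finset.univ.biUnion J := by rw [hcover]; exact Finset.mem_univ x
      obtain ⟨i, -, hxi⟩ := Finset.mem_biUnion.mp hx
      exact ⟨⟨i, ((J i).orderIsoOfFin (hc i)).symm ⟨x, hxi⟩⟩, by simp⟩)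

@[simp] lemma blockEquiv_apply {k n : ℕ} (c : Fin n → ℕ) (J : Fin n → Finset (Fin k))
    (hc : ∀ i, (J i).card = c i)
    (hdisj : ∀ i j, i ≠ j → Disjoint (J i) (J j))
    (hcover : Finset.univ.biUnion J = (Finset.univ : Finset (Fin k)))
    (p : Σ i : Fin n, Fin (c i)) :
    blockEquiv c J hc hdisj hcover p = ((J p.1).orderIsoOfFin (hc p.1) p.2 : Fin k) := rfl
lemma fiber_sum (F : Type*) [Field F] (k n : ℕ)
    (I : Fin n → Finset (Fin k))
    (hIdisj : ∀ i j, i ≠ j → Disjoint (I i) (I j))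
    (hIcover : Finset.univ.biUnion I = (Finset.univ : Finset (Fin k)))
    (A : Matrix (Fin k) (Fin k) F)
    (J : Fin n → Finset (Fin k))
    (hJc : ∀ i, (J i).card = (I i).card)
    (hJdisj : ∀ i j, i ≠ j → Disjoint (J i) (J j))
    (hJcover : Finset.univ.biUnion J = (Finset.univ : Finset (Fin k)))
    (σJ : Equiv.Perm (Fin k))
    (hmaps : ∀ i, ∀ j ∈ J i, σJ j ∈ I i)
    (hmono : ∀ i, StrictMonoOn σJ ↑(J i)) :
    ∑ τ ∈ Finset.univ.filter
        (fun τ : Equiv.Perm (Fin k) => (fun i => (I i).image τ) = J),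
        ((Equiv.Perm.sign τ : ℤ) : F) * ∏ x, A (τ x) x
      = ((Equiv.Perm.sign σJ : ℤ) : F) *
        ∏ i, (A.submatrix
            (fun a : Fin ((I i).card) => ((J i).orderIsoOfFin (hJc i) a : Fin k))
            (fun a : Fin ((I i).card) => ((I i).orderIsoOfFin rfl a : Fin k))).det := by
  classical
  set c : Fin n → ℕ := fun i => (I i).card with hcdef
  have hcI : ∀ i, (I i).card = c i := fun i => rfl
  let eI : (Σ i, Fin (c i)) ≃ Fin k := blockEquiv c I hcI hIdisj hIcover
  let eJ : (Σ i, Fin (c i)) ≃ Fin k := blockEquiv c J hJc hJdisj hJcover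
  have heI : ∀ p : Σ i, Fin (c i), eI p = ((I p.1).orderIsoOfFin (hcI p.1) p.2 : Fin k) :=
    fun p => rfl
  have heJ : ∀ p : Σ i, Fin (c i), eJ p = ((J p.1).orderIsoOfFin (hJc p.1) p.2 : Fin k) :=
    fun p => rfl
  have heImem : ∀ p : Σ i, Fin (c i), eI p ∈ I p.1 :=
    fun p => ((I p.1).orderIsoOfFin (hcI p.1) p.2).2
  have heJmem : ∀ p : Σ i, Fin (c i), eJ p ∈ J p.1 :=
    fun p => ((J p.1).orderIsoOfFin (hJc p.1) p.2).2
  -- the key property of σJ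
  have key : ∀ p : Σ i, Fin (c i), σJ (eJ p) = eI p := by
    rintro ⟨i, a⟩
    have hfs : ∀ a : Fin (c i), σJ ((J i).orderEmbOfFin (hJc i) a) ∈ I i :=
      fun a => hmaps i _ (Finset.orderEmbOfFin_mem _ _ _)
    have hsm : StrictMono (fun a : Fin (c i) => σJ ((J i).orderEmbOfFin (hJc i) a)) := by
      intro a b hab
      exact hmono i (Finset.orderEmbOfFin_mem _ _ _) (Finset.orderEmbOfFin_mem _ _ _)
        (((J i).orderEmbOfFin (hJc i)).strictMono hab)
    have huniq := Finset.orderEmbOfFin_unique (s := I i) (h := hcI i) hfs hsm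
    show σJ ((J i).orderIsoOfFin (hJc i) a : Fin k) = ((I i).orderIsoOfFin (hcI i) a : Fin k)
    rw [Finset.coe_orderIsoOfFin_apply, Finset.coe_orderIsoOfFin_apply]
    exact congrFun huniq a
  -- the permutation associated to a tuple of block permutations
  let T : (∀ i, Equiv.Perm (Fin (c i))) → Equiv.Perm (Fin k) :=
    fun ρ => eI.symm.trans ((Equiv.sigmaCongrRight ρ).trans eJ)
  have hT : ∀ ρ (p : Σ i, Fin (c i)), T ρ (eI p) = eJ ⟨p.1, ρ p.1 p.2⟩ := by
    intro ρ p
    show eJ (Equiv.sigmaCongrRight ρ (eI.symm (eI p))) = _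
    rw [Equiv.symm_apply_apply]
    rcases p with ⟨i, a⟩
    rfl
  -- rewriting the right-hand side as a sum over tuples of permutations
  have hdet : ∀ i, (A.submatrix
        (fun a : Fin ((I i).card) => ((J i).orderIsoOfFin (hJc i) a : Fin k))
        (fun a : Fin ((I i).card) => ((I i).orderIsoOfFin rfl a : Fin k))).det
      = ∑ π : Equiv.Perm (Fin (c i)), ((Equiv.Perm.sign π : ℤ) : F) *
          ∏ a, A ((J i).orderIsoOfFin (hJc i) (π a) : Fin k)
            ((I i).orderIsoOfFin (hcI i) a : Fin k) := by
    intro i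
    rw [Matrix.det_apply']
    rfl
  have hRHS : ((Equiv.Perm.sign σJ : ℤ) : F) *
        ∏ i, (A.submatrix
            (fun a : Fin ((I i).card) => ((J i).orderIsoOfFin (hJc i) a : Fin k))
            (fun a : Fin ((I i).card) => ((I i).orderIsoOfFin rfl a : Fin k))).det
      = ∑ ρ : ∀ i, Equiv.Perm (Fin (c i)), ((Equiv.Perm.sign σJ : ℤ) : F) *
          ∏ i, (((Equiv.Perm.sign (ρ i) : ℤ)) : F) *
            ∏ a, A ((J i).orderIsoOfFin (hJc i) (ρ i a) : Fin k)
              ((I i).orderIsoOfFin (hcI i) a : Fin k) := by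
    rw [← Finset.mul_sum]
    congr 1
    rw [show (∏ i, (A.submatrix
            (fun a : Fin ((I i).card) => ((J i).orderIsoOfFin (hJc i) a : Fin k))
            (fun a : Fin ((I i).card) => ((I i).orderIsoOfFin rfl a : Fin k))).det)
        = ∏ i, ∑ π : Equiv.Perm (Fin (c i)), ((Equiv.Perm.sign π : ℤ) : F) *
          ∏ a, A ((J i).orderIsoOfFin (hJc i) (π a) : Fin k)
            ((I i).orderIsoOfFin (hcI i) a : Fin k) from Finset.prod_congr rfl fun i _ => hdet i]
    rw [Fintype.prod_sum]
  rw [hRHS]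
  refine (Finset.sum_bij (fun ρ _ => T ρ) ?_ ?_ ?_ ?_).symm
  · -- membership
    intro ρ _
    simp only [Finset.mem_filter, Finset.mem_univ, true_and]
    funext i
    ext x
    simp only [Finset.mem_image]
    constructor
    · rintro ⟨y, hy, rfl⟩
      have hya : y = eI ⟨i, ((I i).orderIsoOfFin (hcI i)).symm ⟨y, hy⟩⟩ := by
        rw [heI]; simp
      rw [hya, hT]
      exact heJmem _
    · intro hx
      refine ⟨eI ⟨i, (ρ i).symm (((J i).orderIsoOfFin (hJc i)).symm ⟨x, hx⟩)⟩, heImem _, ?_⟩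
      rw [hT]
      show eJ ⟨i, ρ i ((ρ i).symm _)⟩ = x
      rw [Equiv.apply_symm_apply, heJ]
      simp
  · -- injectivity
    intro ρ₁ _ ρ₂ _ h
    funext i
    ext a
    have h1 := congrArg (fun τ : Equiv.Perm (Fin k) => τ (eI ⟨i, a⟩)) h
    rw [hT, hT] at h1
    have h2 := eJ.injective h1
    have h3 : (ρ₁ i) a = (ρ₂ i) a := by simpa using h2
    rw [h3]
  · -- surjectivity
    intro τ hτ
    simp only [Finset.mem_filter, Finset.mem_univ, true_and] at hτ
    have hmem' : ∀ (i) (a : Fin (c i)), τ (eI ⟨i, a⟩) ∈ J i := by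
      intro i a
      have h3 : τ (eI ⟨i, a⟩) ∈ (I i).image τ :=
        Finset.mem_image_of_mem τ (heImem ⟨i, a⟩)
      rwa [congrFun hτ i] at h3
    have hfinj : ∀ i, Function.Injective (fun a : Fin (c i) =>
        ((J i).orderIsoOfFin (hJc i)).symm ⟨τ (eI ⟨i, a⟩), hmem' i a⟩) := by
      intro i a b hab
      have h4 := congrArg (fun z => (((J i).orderIsoOfFin (hJc i)) z : Fin k)) hab
      simp only [OrderIso.apply_symm_apply] at h4
      have h5 := eI.injective (τ.injective h4)
      exact eq_of_heq (Sigma.mk.inj_iff.mp h5).2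
    refine ⟨fun i => Equiv.ofBijective _ (Finite.injective_iff_bijective.mp (hfinj i)),
      Finset.mem_univ _, ?_⟩
    apply Equiv.ext
    intro x
    obtain ⟨p, rfl⟩ := eI.surjective x
    rcases p with ⟨i, a⟩
    rw [hT]
    show eJ ⟨i, ((J i).orderIsoOfFin (hJc i)).symm ⟨τ (eI ⟨i, a⟩), hmem' i a⟩⟩ = τ (eI ⟨i, a⟩)
    rw [heJ]
    simp
  · -- values
    intro ρ _
    have hsign : Equiv.Perm.sign (T ρ) =
        Equiv.Perm.sign σJ * ∏ i, Equiv.Perm.sign (ρ i) := by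
      have h1 : Equiv.Perm.sign (Equiv.sigmaCongrRight ρ) = Equiv.Perm.sign (σJ * T ρ) := by
        apply Equiv.Perm.sign_eq_sign_of_equiv _ _ eI
        rintro ⟨i, a⟩
        show eI (Equiv.sigmaCongrRight ρ ⟨i, a⟩) = (σJ * T ρ) (eI ⟨i, a⟩)
        rw [Equiv.Perm.mul_apply, hT, key]
        rfl
      have h2 : Equiv.Perm.sign σJ * Equiv.Perm.sign (T ρ) =
          ∏ i, Equiv.Perm.sign (ρ i) := by
        rw [← map_mul, ← h1, sign_sigmaCongrRight]
      calc Equiv.Perm.sign (T ρ)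
          = (Equiv.Perm.sign σJ * Equiv.Perm.sign σJ) * Equiv.Perm.sign (T ρ) := by
            rw [Int.units_mul_self, one_mul]
        _ = Equiv.Perm.sign σJ * ∏ i, Equiv.Perm.sign (ρ i) := by rw [mul_assoc, h2]
    have hcast : ((Equiv.Perm.sign (T ρ) : ℤ) : F) =
        ((Equiv.Perm.sign σJ : ℤ) : F) * ∏ i, ((Equiv.Perm.sign (ρ i) : ℤ) : F) := by
      rw [hsign, Units.val_mul, Int.cast_mul]
      congr 1
      rw [show ((∏ i, Equiv.Perm.sign (ρ i) : ℤˣ) : ℤ)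
          = ∏ i, ((Equiv.Perm.sign (ρ i) : ℤˣ) : ℤ) from map_prod (Units.coeHom ℤ) _ _,
        Int.cast_prod]
    have hprod : ∏ x, A (T ρ x) x
        = ∏ i, ∏ a, A ((J i).orderIsoOfFin (hJc i) (ρ i a) : Fin k)
            ((I i).orderIsoOfFin (hcI i) a : Fin k) := by
      rw [← Equiv.prod_comp eI (fun x => A (T ρ x) x), ← Finset.univ_sigma_univ,
        Finset.prod_sigma]
      refine Finset.prod_congr rfl fun i _ => Finset.prod_congr rfl fun a _ => ?_
      rw [hT]
      rfl
    rw [hcast, hprod, Finset.prod_mul_distrib]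
    ring
theorem stmt_12 (F : Type*) [Field F] (k n : ℕ)
    (I : Fin n → Finset (Fin k))
    (hIdisj : ∀ i j, i ≠ j → Disjoint (I i) (I j))
    (hIcover : Finset.univ.biUnion I = (Finset.univ : Finset (Fin k)))
    (A : Matrix (Fin k) (Fin k) F)
    (P : Finset (Fin n → Finset (Fin k)))
    (hP : P = Finset.univ.filter (fun J : Fin n → Finset (Fin k) =>
      (∀ i, (J i).card = (I i).card) ∧
      (∀ i j, i ≠ j → J i ∩ J j = ∅) ∧
      Finset.univ.biUnion J = (Finset.univ : Finset (Fin k))))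
    (hPcard : ∀ J ∈ P, ∀ i, (J i).card = (I i).card)
    (σ : (Fin n → Finset (Fin k)) → Equiv.Perm (Fin k))
    (hσmaps : ∀ J ∈ P, ∀ i, ∀ j ∈ J i, σ J j ∈ I i)
    (hσmono : ∀ J ∈ P, ∀ i, StrictMonoOn (σ J) ↑(J i)) :
    A.det = ∑ J ∈ P.attach,
      ((Equiv.Perm.sign (σ J.1) : ℤ) : F) *
        ∏ i : Fin n,
          (A.submatrix
            (fun a : Fin ((I i).card) =>
              ((J.1 i).orderIsoOfFin (hPcard J.1 J.2 i) a : Fin k))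
            (fun a : Fin ((I i).card) =>
              ((I i).orderIsoOfFin rfl a : Fin k))).det := by
  classical
  have hPiff : ∀ J : Fin n → Finset (Fin k), J ∈ P ↔
      ((∀ i, (J i).card = (I i).card) ∧
        (∀ i j, i ≠ j → J i ∩ J j = ∅) ∧
        Finset.univ.biUnion J = (Finset.univ : Finset (Fin k))) := by
    intro J
    rw [hP]
    simp only [Finset.mem_filter, Finset.mem_univ, true_and]
  have hmapsP : ∀ τ : Equiv.Perm (Fin k), (fun i => (I i).image τ) ∈ P := by
    intro τ
    rw [hPiff]
    refine ⟨fun i => Finset.card_image_of_injective _ τ.injective, ?_, ?_⟩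
    · intro i j hij
      rw [← Finset.disjoint_iff_inter_eq_empty]
      exact (Finset.disjoint_image τ.injective).mpr (hIdisj i j hij)
    · ext x
      simp only [Finset.mem_biUnion, Finset.mem_image, Finset.mem_univ, iff_true, true_and]
      have hx : τ.symm x ∈ Finset.univ.biUnion I := by rw [hIcover]; exact Finset.mem_univ _
      obtain ⟨i, -, hi⟩ := Finset.mem_biUnion.mp hx
      exact ⟨i, τ.symm x, hi, τ.apply_symm_apply x⟩
  rw [Matrix.det_apply']
  rw [← Finset.sum_fiberwise_of_maps_to (g := fun τ : Equiv.Perm (Fin k) => fun i => (I i).image τ)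
    (fun τ _ => hmapsP τ) (fun τ => ((Equiv.Perm.sign τ : ℤ) : F) * ∏ x, A (τ x) x)]
  rw [← Finset.sum_attach P (fun J => ∑ τ ∈ Finset.univ.filter
      (fun τ : Equiv.Perm (Fin k) => (fun i => (I i).image τ) = J),
      ((Equiv.Perm.sign τ : ℤ) : F) * ∏ x, A (τ x) x)]
  refine Finset.sum_congr rfl ?_
  rintro ⟨J, hJ⟩ -
  have hmemJ := (hPiff J).mp hJ
  exact fiber_sum F k n I hIdisj hIcover A J (hPcard J hJ)
    (fun i j hij => Finset.disjoint_iff_inter_eq_empty.mpr (hmemJ.2.1 i j hij))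
    hmemJ.2.2 (σ J) (hσmaps J hJ) (hσmono J hJ)
end

section
/- Let V be a finite-dimensional vector space over a field F, and suppose V = V_1 ⊕ ... ⊕ V_n is a direct sum of subspaces. Let v_1,...,v_k be any basis of V (k = dim V). Then there exists a partition {1,...,k} = J_1 ∪ ... ∪ J_n with |J_i| = dim V_i such that for every i, the images of (v_j)_{j ∈ J_i} under the projection V → V_i (along the direct sum decomposition) form a basis of V_i. -/
theorem stmt_13 (F V : Type*) [Field F] [AddCommGroup V] [Module F V]
    [FiniteDimensional F V] (n k : ℕ) (W : Fin n → Submodule F V)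
    (hW : DirectSum.IsInternal W) (v : Module.Basis (Fin k) F V) :
    ∃ J : Fin n → Finset (Fin k),
      (∀ i j, i ≠ j → Disjoint (J i) (J j)) ∧
      Finset.univ.biUnion J = (Finset.univ : Finset (Fin k)) ∧
      ∀ i, (J i).card = Module.finrank F (W i) ∧
        LinearIndependent F (fun j : (J i) =>
          ((LinearEquiv.ofBijective (DirectSum.coeLinearMap W) hW).symm (v j)) i) ∧
        Submodule.span F (Set.range (fun j : (J i) =>
          ((LinearEquiv.ofBijective (DirectSum.coeLinearMap W) hW).symm (v j)) i)) = ⊤ := by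
  classical
  set E := LinearEquiv.ofBijective (DirectSum.coeLinearMap W) hW with hE
  have hdecomp : ∀ x : V, x = ∑ i : Fin n, ((E.symm x) i : V) := by
    intro x
    conv_lhs => rw [← E.apply_symm_apply x]
    change DirectSum.coeLinearMap W (E.symm x) = _
    conv_lhs => rw [← DirectSum.sum_univ_of (E.symm x)]
    rw [map_sum]
    simp [DirectSum.coeLinearMap_of]
  have hdet : (v.det fun j => ∑ i : Fin n, ((E.symm (v j)) i : V)) ≠ 0 := by
    have : (fun j => ∑ i : Fin n, ((E.symm (v j)) i : V)) = v := by
      funext j; exact (hdecomp (v j)).symm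
    rw [this, Module.Basis.det_self]
    exact one_ne_zero
  have hexp := MultilinearMap.map_sum (v.det.toMultilinearMap)
      (fun j (i : Fin n) => ((E.symm (v j)) i : V))
  rw [show (v.det.toMultilinearMap fun j => ∑ i : Fin n, ((E.symm (v j)) i : V))
      = (v.det fun j => ∑ i : Fin n, ((E.symm (v j)) i : V)) from rfl] at hexp
  rw [hexp] at hdet
  obtain ⟨f, -, hf⟩ := Finset.exists_ne_zero_of_sum_ne_zero (by simpa using hdet)
  set w : Fin k → V := fun j => ((E.symm (v j)) (f j) : V) with hw
  have hwind : LinearIndependent F w := by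
    by_contra h
    exact hf (v.det.map_linearDependent w h)
  set J : Fin n → Finset (Fin k) := fun i => Finset.univ.filter (fun j => f j = i) with hJ
  have hmem : ∀ i, ∀ j ∈ J i, f j = i := by
    intro i j hj
    simpa [hJ] using hj
  -- linear independence of components on each fiber
  have hind : ∀ i, LinearIndependent F (fun j : (J i) => (E.symm (v j)) i) := by
    intro i
    apply LinearIndependent.of_comp ((W i).subtype)
    have heq : ((W i).subtype ∘ fun j : (J i) => (E.symm (v j)) i)
        = fun j : (J i) => w j := by
      funext j
      obtain ⟨j, hj⟩ := j
      have hfj : f j = i := hmem i j hj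
      subst hfj
      rfl
    rw [heq]
    exact hwind.comp Subtype.val Subtype.val_injective
  -- cardinalities
  have hle : ∀ i, (J i).card ≤ Module.finrank F (W i) := by
    intro i
    have := (hind i).fintype_card_le_finrank
    simpa [Fintype.card_coe] using this
  have hsumJ : ∑ i : Fin n, (J i).card = k := by
    have := Finset.card_eq_sum_card_fiberwise
      (s := (Finset.univ : Finset (Fin k))) (t := (Finset.univ : Finset (Fin n)))
      (f := f) (fun x _ => Finset.mem_univ (f x))
    simp only [Finset.card_univ, Fintype.card_fin] at this
    rw [← this]
  have hsumd : ∑ i : Fin n, Module.finrank F (W i) = k := by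
    have B := hW.collectedBasis (fun i => Module.finBasis F (W i))
    have h1 : Module.finrank F V = ∑ i : Fin n, Module.finrank F (W i) := by
      rw [Module.finrank_eq_card_basis B, Fintype.card_sigma]
      simp
    have h2 : Module.finrank F V = k := by
      rw [Module.finrank_eq_card_basis v, Fintype.card_fin]
    omega
  have hcard : ∀ i, (J i).card = Module.finrank F (W i) := by
    have := (Finset.sum_eq_sum_iff_of_le (s := (Finset.univ : Finset (Fin n)))
      (fun i _ => hle i)).mp (by rw [hsumJ, hsumd])
    exact fun i => this i (Finset.mem_univ i)
  refine ⟨J, ?_, ?_, ?_⟩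
  · intro i j hij
    simp only [hJ]
    refine Finset.disjoint_left.mpr fun a ha hb => hij ?_
    simp only [Finset.mem_filter] at ha hb
    rw [← ha.2, hb.2]
  · ext j
    simp [hJ]
  · intro i
    refine ⟨hcard i, hind i, ?_⟩
    apply (hind i).span_eq_top_of_card_eq_finrank'
    rw [Fintype.card_coe, hcard i]
end
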